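/- Let R be a ring. Suppose that either R has invariant basis number, or R has type (n, h) with n > 1, or R has type (1, 1) or (1, 2). Then every automorphism of the category C_R of finitely generated free left R-modules is semi-inner. -/

import Mathlib

open CategoryTheory CategoryTheory.Limits

/-- The category `C_R`: the full subcategory of the category of left `R`-modules whose
objects are the finitely generated free left `R`-modules. -/
def CR (R : Type) [Ring R] : Type 1 :=
  ObjectProperty.FullSubcategory (fun M : ModuleCat.{0} R => Module.Finite R M ∧ Module.Free R M)

instance (R : Type) [Ring R] : Category (CR R) :=
  ObjectProperty.FullSubcategory.category _

/-- A morphism of `C_R` is just an `R`-linear map. -/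
def homToLin {R : Type} [Ring R] {F G : CR R} (f : F ⟶ G) : F.obj →ₗ[R] G.obj := f.hom.hom

/-- An automorphism `φ` of the category `C_R` is *semi-inner* if there are a ring
automorphism `σ` of `R` and additive isomorphisms `s_F : F ≃+ φ(F)`, one for each object
`F` of `C_R`, with `s_F (r • a) = σ r • s_F a`, such that `φ(f) ∘ s_F = s_G ∘ f` for
every `R`-linear map `f : F ⟶ G`. -/
def SemiInner (R : Type) [Ring R] (φ : Aut (Cat.of (CR R))) : Prop :=
  ∃ (σ : R ≃+* R)
    (s : ∀ F : CR R, F.obj ≃+ ((φ.hom.toFunctor : CR R ⥤ CR R).obj F).obj),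
    (∀ (F : CR R) (r : R) (a : F.obj), s F (r • a) = σ r • s F a) ∧
    (∀ (F G : CR R) (f : F ⟶ G) (a : F.obj),
      homToLin ((φ.hom.toFunctor : CR R ⥤ CR R).map f) (s F a) = s G (homToLin f a))

/-- A ring `R` *has type* `(n, h)` if `(n, h)` is the lexicographically least pair of
positive integers such that `R^n ≅ R^(n+h)` as left `R`-modules. -/
def HasType (R : Type) [Ring R] (n h : ℕ) : Prop :=
  0 < n ∧ 0 < h ∧ Nonempty ((Fin n → R) ≃ₗ[R] (Fin (n + h) → R)) ∧
    ∀ n' h' : ℕ, 0 < n' → 0 < h' →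
      Nonempty ((Fin n' → R) ≃ₗ[R] (Fin (n' + h') → R)) →
      (n < n' ∨ (n = n' ∧ h ≤ h'))

section Aux

variable (R : Type) [Ring R]

instance : Preadditive (CR R) :=
  inferInstanceAs (Preadditive (ObjectProperty.FullSubcategory _))

def homOfLin {F G : CR R} (f : F.obj →ₗ[R] G.obj) : F ⟶ G := ⟨ModuleCat.ofHom f⟩

theorem lin_ext {F G : CR R} {f g : F ⟶ G} (h : ∀ x, homToLin f x = homToLin g x) : f = g :=
  InducedCategory.hom_ext (ModuleCat.hom_ext (LinearMap.ext h))

noncomputable def prodObj (F G : CR R) : CR R :=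
  haveI : Module.Finite R F.obj := F.property.1; haveI : Module.Free R F.obj := F.property.2
  haveI : Module.Finite R G.obj := G.property.1; haveI : Module.Free R G.obj := G.property.2
  ⟨ModuleCat.of R (F.obj × G.obj),
    ⟨inferInstanceAs (Module.Finite R (↥F.obj × ↥G.obj)),
     inferInstanceAs (Module.Free R (↥F.obj × ↥G.obj))⟩⟩

noncomputable def myBicone (F G : CR R) : BinaryBicone F G where
  pt := prodObj R F G
  fst := homOfLin R (LinearMap.fst R F.obj G.obj)
  snd := homOfLin R (LinearMap.snd R F.obj G.obj)
  inl := homOfLin R (LinearMap.inl R F.obj G.obj)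
  inr := homOfLin R (LinearMap.inr R F.obj G.obj)
  inl_fst := lin_ext R fun x => rfl
  inr_snd := lin_ext R fun x => rfl
  inl_snd := lin_ext R fun x => rfl
  inr_fst := lin_ext R fun x => rfl

noncomputable def myBilimit (F G : CR R) : (myBicone R F G).IsBilimit :=
  isBinaryBilimitOfTotal _ (by
    apply lin_ext R; intro x
    show ((x.1, 0) : ↥F.obj × ↥G.obj) + (0, x.2) = x
    exact Prod.ext (add_zero _) (zero_add _))

instance : HasBinaryBiproducts (CR R) where
  has_binary_biproduct F G := HasBinaryBiproduct.mk
    { bicone := myBicone R F G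
      isBilimit := myBilimit R F G }

noncomputable def Rn (k : ℕ) : CR R :=
  ⟨ModuleCat.of R (Fin k → R),
    ⟨inferInstanceAs (Module.Finite R (Fin k → R)), inferInstanceAs (Module.Free R (Fin k → R))⟩⟩

def R1 : CR R :=
  ⟨ModuleCat.of R R, ⟨inferInstanceAs (Module.Finite R R), inferInstanceAs (Module.Free R R)⟩⟩

def isoOfLE {F G : CR R} (e : F.obj ≃ₗ[R] G.obj) : F ≅ G where
  hom := homOfLin R e.toLinearMap
  inv := homOfLin R e.symm.toLinearMap
  hom_inv_id := lin_ext R fun x => e.symm_apply_apply x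
  inv_hom_id := lin_ext R fun x => e.apply_symm_apply x

def isoToLE {F G : CR R} (e : F ≅ G) : F.obj ≃ₗ[R] G.obj :=
  LinearEquiv.ofLinear (homToLin e.hom) (homToLin e.inv) (congrArg homToLin e.inv_hom_id)
    (congrArg homToLin e.hom_inv_id)

theorem exists_iso_Rn (F : CR R) : ∃ k, Nonempty (F ≅ Rn R k) := by
  haveI : Module.Finite R F.obj := F.property.1; haveI : Module.Free R F.obj := F.property.2
  let b := Module.Free.chooseBasis R F.obj
  refine ⟨Fintype.card (Module.Free.ChooseBasisIndex R F.obj),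
    ⟨isoOfLE R (b.equivFun.trans (LinearEquiv.funCongrLeft R R (Fintype.equivFin _)).symm)⟩⟩

def cls (a b : ℕ) : Prop := Nonempty ((Fin a → R) ≃ₗ[R] (Fin b → R))

theorem cls_of_iso {a b : ℕ} (e : Rn R a ≅ Rn R b) : cls R a b := ⟨isoToLE R e⟩

theorem iso_of_cls {a b : ℕ} (h : cls R a b) : Nonempty (Rn R a ≅ Rn R b) :=
  h.elim fun e => ⟨isoOfLE R e⟩

theorem cls_refl (a : ℕ) : cls R a a := ⟨LinearEquiv.refl R _⟩
theorem cls_symm {a b : ℕ} (h : cls R a b) : cls R b a := h.elim fun e => ⟨e.symm⟩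
theorem cls_trans {a b c : ℕ} (h : cls R a b) (h' : cls R b c) : cls R a c :=
  h.elim fun e => h'.elim fun e' => ⟨e.trans e'⟩

noncomputable def finAddLE (a c : ℕ) : (Fin (a + c) → R) ≃ₗ[R] (Fin a → R) × (Fin c → R) :=
  (LinearEquiv.funCongrLeft R R finSumFinEquiv).trans
    (LinearEquiv.sumArrowLequivProdArrow _ _ R R)

theorem cls_add {a b : ℕ} (c : ℕ) (h : cls R a b) : cls R (a + c) (b + c) :=
  h.elim fun e => ⟨(finAddLE R a c).trans (((e.prodCongr (LinearEquiv.refl R _))).trans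
    (finAddLE R b c).symm)⟩

theorem cls_of_subsingleton (hs : Subsingleton R) (a b : ℕ) : cls R a b :=
  ⟨LinearEquiv.ofLinear 0 0 (LinearMap.ext fun x => Subsingleton.elim _ _)
    (LinearMap.ext fun x => Subsingleton.elim _ _)⟩

theorem subsingleton_of_cls10 (h : cls R 1 0) : Subsingleton R := by
  obtain ⟨e⟩ := h
  haveI : Subsingleton (Fin 1 → R) := e.toEquiv.subsingleton
  exact (Equiv.funUnique (Fin 1) R).symm.subsingleton

section Phi

theorem Phi_isEquiv (φ : Aut (Cat.of (CR R))) : (φ.hom.toFunctor : CR R ⥤ CR R).IsEquivalence :=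
  (Cat.equivOfIso φ).isEquivalence_functor

variable (Φ : CR R ⥤ CR R) [Φ.IsEquivalence]

theorem Phi_bij (A B : CR R) :
    Function.Bijective fun f : A ⟶ B => Φ.map f :=
  ⟨fun _ _ h => Φ.map_injective h, fun g => Φ.map_surjective g⟩

theorem Phi_additive : Φ.Additive :=
  Functor.additive_of_preserves_binary_products _

end Phi

noncomputable def biprodIso (a b : ℕ) : Rn R (a + b) ≅ (Rn R a) ⊞ (Rn R b) :=
  (isoOfLE R (finAddLE R a b) : Rn R (a + b) ≅ prodObj R (Rn R a) (Rn R b)) ≪≫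
    biprod.uniqueUpToIso _ _ (myBilimit R (Rn R a) (Rn R b))

theorem isZero_Rn0 : Limits.IsZero (Rn R 0) := by
  rw [Limits.IsZero.iff_id_eq_zero]
  apply lin_ext R; intro x
  exact Subsingleton.elim (α := Fin 0 → R) _ _

section Phi2
variable (Φ : CR R ⥤ CR R) [Φ.IsEquivalence] [Φ.Additive]

theorem Phi_mul {k : ℕ} (hk : Nonempty (Φ.obj (Rn R 1) ≅ Rn R k)) (m : ℕ) :
    Nonempty (Φ.obj (Rn R m) ≅ Rn R (m * k)) := by
  induction m with
  | zero =>
      refine ⟨Limits.IsZero.iso ?_ ?_⟩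
      · rw [Limits.IsZero.iff_id_eq_zero, ← Φ.map_id, ← Φ.map_zero]
        congr 1
        rw [← Limits.IsZero.iff_id_eq_zero]
        exact isZero_Rn0 R
      · rw [Nat.zero_mul]; exact isZero_Rn0 R
  | succ m ih =>
      haveI : Limits.PreservesBinaryBiproducts Φ :=
        Limits.preservesBinaryBiproducts_of_preservesBinaryProducts Φ
      obtain ⟨e⟩ := ih; obtain ⟨e1⟩ := hk
      refine ⟨Φ.mapIso (biprodIso R m 1) ≪≫ Φ.mapBiprod _ _ ≪≫
        biprod.mapIso e e1 ≪≫ (biprodIso R (m * k) k).symm ≪≫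
        eqToIso (by rw [Nat.succ_mul])⟩

theorem exists_cls_one {k : ℕ} (hk : Nonempty (Φ.obj (Rn R 1) ≅ Rn R k)) :
    ∃ m, cls R 1 (m * k) := by
  obtain ⟨m, ⟨e⟩⟩ := exists_iso_Rn R (Φ.objPreimage (Rn R 1))
  obtain ⟨e2⟩ := Phi_mul R Φ hk m
  exact ⟨m, cls_of_iso R ((Φ.objObjPreimageIso (Rn R 1)).symm ≪≫ Φ.mapIso e ≪≫ e2)⟩

end Phi2

theorem cls_one_all (h2 : cls R 1 2) : ∀ j, cls R 1 (j + 1)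
  | 0 => cls_refl R 1
  | (j+1) => cls_trans R h2 (by
      exact cls_add R 1 (cls_one_all h2 j))

theorem cls_one_odd (h3 : cls R 1 3) : ∀ t, cls R 1 (2 * t + 1)
  | 0 => cls_refl R 1
  | (t+1) => cls_trans R h3 (by
      have := cls_add R 2 (cls_one_odd h3 t)
      rwa [show 2*t+1+2 = 2*(t+1)+1 from by omega] at this)

theorem cls_two_even (h3 : cls R 1 3) : ∀ t, cls R 2 (2 * t + 2)
  | 0 => cls_refl R 2
  | (t+1) => by
      have h24 : cls R 2 4 := cls_add R 1 h3
      refine cls_trans R h24 ?_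
      have := cls_add R 2 (cls_two_even h3 t)
      rwa [show 2*t+2+2 = 2*(t+1)+2 from by omega] at this

theorem cls_k_one
    (hR : (∀ n m : ℕ, Nonempty ((Fin n → R) ≃ₗ[R] (Fin m → R)) → n = m) ∨
          (∃ n h : ℕ, HasType R n h ∧ 1 < n) ∨
          HasType R 1 1 ∨ HasType R 1 2)
    {k m : ℕ} (hm : cls R 1 (m * k)) : cls R k 1 := by
  rcases Nat.eq_zero_or_pos (m * k) with h0 | hpos
  · exact cls_of_subsingleton R (subsingleton_of_cls10 R (h0 ▸ hm)) k 1
  have hkpos : 0 < k := by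
    rcases Nat.eq_zero_or_pos k with hz | hp
    · rw [hz, Nat.mul_zero] at hpos; omega
    · exact hp
  rcases hR with hIBN | ⟨n, h, hT, hn⟩ | hT | hT
  · have h1 : 1 = m * k := hIBN 1 (m * k) hm
    have : k = 1 := Nat.dvd_one.mp ⟨m, by rw [Nat.mul_comm k m]; exact h1⟩
    rw [this]; exact cls_refl R 1
  · rcases Nat.lt_or_ge (m * k) 2 with hlt | hge
    · have : m * k = 1 := by omega
      have hk1 : k = 1 := Nat.dvd_one.mp ⟨m, by rw [Nat.mul_comm k m]; exact this.symm⟩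
      rw [hk1]; exact cls_refl R 1
    · exfalso
      have heq : 1 + (m * k - 1) = m * k := by omega
      have hm' : Nonempty ((Fin 1 → R) ≃ₗ[R] (Fin (1 + (m * k - 1)) → R)) := by
        rw [heq]; exact hm
      rcases hT.2.2.2 1 (m * k - 1) one_pos (by omega) hm' with h' | ⟨h', _⟩ <;> omega
  · have h2 : cls R 1 2 := hT.2.2.1
    have : cls R 1 k := by
      have := cls_one_all R h2 (k - 1)
      rwa [Nat.sub_add_cancel hkpos] at this
    exact cls_symm R this
  · have h3 : cls R 1 3 := hT.2.2.1
    have not12 : ¬ cls R 1 2 := by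
      intro h12
      rcases hT.2.2.2 1 1 one_pos one_pos h12 with h' | ⟨_, h'⟩ <;> omega
    rcases Nat.even_or_odd k with ⟨s, hs⟩ | ⟨t, ht⟩
    · exfalso
      have hmk_even : ∃ t, m * k = 2 * t + 2 := by
        refine ⟨(m * s) - 1, ?_⟩
        have : m * k = 2 * (m * s) := by rw [hs]; ring
        have hms : 1 ≤ m * s := by nlinarith [hpos]
        omega
      obtain ⟨t, hteq⟩ := hmk_even
      have h2even : cls R 2 (m * k) := by rw [hteq]; exact cls_two_even R h3 t
      exact not12 (cls_trans R hm (cls_symm R h2even))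
    · have : cls R 1 k := by
        have := cls_one_odd R h3 t
        rwa [← ht] at this
      exact cls_symm R this

/-! ### The core construction -/

def ell (F : CR R) (a : F.obj) : R1 R ⟶ F := homOfLin R (LinearMap.toSpanSingleton R F.obj a)

theorem lin_ext_R1 {F : CR R} {f g : R1 R ⟶ F}
    (h : homToLin f (1 : R) = homToLin g (1 : R)) : f = g :=
  InducedCategory.hom_ext (ModuleCat.hom_ext (LinearMap.ext_ring h))

theorem ell_one (F : CR R) (f : R1 R ⟶ F) : ell R F (homToLin f (1 : R)) = f :=
  lin_ext_R1 R (one_smul R (homToLin f (1 : R)))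

theorem ell_comp (F G : CR R) (f : F ⟶ G) (a : F.obj) :
    ell R F a ≫ f = ell R G (homToLin f a) :=
  lin_ext_R1 R (map_smul (homToLin f) (1 : R) a)

theorem ell_smul (F : CR R) (r : R) (a : F.obj) :
    ell R (R1 R) r ≫ ell R F a = ell R F (r • a) :=
  lin_ext_R1 R (show ((1 : R) • r) • a = (1 : R) • (r • a) by rw [one_smul, one_smul])

theorem ell_id : ell R (R1 R) (1 : R) = 𝟙 (R1 R) :=
  lin_ext_R1 R (one_smul R (1 : R))

theorem ell_add (F : CR R) (a b : F.obj) : ell R F (a + b) = ell R F a + ell R F b :=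
  lin_ext_R1 R (smul_add (1 : R) a b)

theorem ev_one_bij (F : CR R) :
    Function.Bijective (fun f : R1 R ⟶ F => homToLin f (1 : R)) :=
  Function.bijective_iff_has_inverse.mpr
    ⟨ell R F, fun f => ell_one R F f, fun a => one_smul R a⟩

theorem ell_bij (F : CR R) : Function.Bijective (ell R F) :=
  Function.bijective_iff_has_inverse.mpr
    ⟨fun f => homToLin f (1 : R), fun a => one_smul R a, fun f => ell_one R F f⟩

section Core
variable (Φ : CR R ⥤ CR R) (u : Φ.obj (R1 R) ≅ R1 R)

noncomputable def w1 : ((Φ.obj (R1 R)).obj : Type) := homToLin u.inv (1 : R)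

noncomputable def TT (F : CR R) (a : F.obj) : ((Φ.obj F).obj : Type) :=
  homToLin (Φ.map (ell R F a)) (w1 R Φ u)

noncomputable def sigma0 (r : R) : R := homToLin u.hom (TT R Φ u (R1 R) r)

theorem key1 (r : R) :
    homToLin (Φ.map (ell R (R1 R) r)) (w1 R Φ u) = homToLin u.inv (sigma0 R Φ u r) := by
  have h := congrArg (fun f => homToLin f (homToLin (Φ.map (ell R (R1 R) r)) (w1 R Φ u)))
    u.hom_inv_id
  exact h.symm

theorem key2 (r : R) :
    homToLin u.inv (sigma0 R Φ u r) = sigma0 R Φ u r • w1 R Φ u := by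
  have e : sigma0 R Φ u r = sigma0 R Φ u r • (1 : R) := by rw [smul_eq_mul, mul_one]
  calc homToLin u.inv (sigma0 R Φ u r)
      = homToLin u.inv (sigma0 R Φ u r • (1 : R)) :=
        congrArg (fun y : R => homToLin u.inv y) e
    _ = sigma0 R Φ u r • w1 R Φ u := map_smul (homToLin u.inv) _ _

theorem key3 (r : R) :
    homToLin (Φ.map (ell R (R1 R) r)) (w1 R Φ u) = sigma0 R Φ u r • w1 R Φ u :=
  (key1 R Φ u r).trans (key2 R Φ u r)

theorem sigma0_one : sigma0 R Φ u 1 = 1 := by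
  have h1 : sigma0 R Φ u 1 = homToLin u.hom (homToLin (Φ.map (𝟙 (R1 R))) (w1 R Φ u)) := by
    unfold sigma0 TT; rw [ell_id]
  rw [Φ.map_id] at h1
  have h2 := congrArg (fun f => homToLin f (1 : R)) u.inv_hom_id
  exact h1.trans h2

theorem sigma0_mul (r s : R) : sigma0 R Φ u (r * s) = sigma0 R Φ u r * sigma0 R Φ u s := by
  have h1 : ell R (R1 R) (r * s) = ell R (R1 R) r ≫ ell R (R1 R) s :=
    (ell_smul R (R1 R) r s).symm
  have h2 : sigma0 R Φ u (r * s)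
      = homToLin u.hom (homToLin (Φ.map (ell R (R1 R) s))
          (homToLin (Φ.map (ell R (R1 R) r)) (w1 R Φ u))) := by
    unfold sigma0 TT; rw [h1, Φ.map_comp]; rfl
  rw [key3 R Φ u r] at h2
  have h3 : homToLin (Φ.map (ell R (R1 R) s)) (sigma0 R Φ u r • w1 R Φ u)
      = sigma0 R Φ u r • homToLin (Φ.map (ell R (R1 R) s)) (w1 R Φ u) :=
    map_smul (homToLin (Φ.map (ell R (R1 R) s))) _ _
  rw [h3] at h2
  have h4 : homToLin u.hom (sigma0 R Φ u r • homToLin (Φ.map (ell R (R1 R) s)) (w1 R Φ u))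
      = sigma0 R Φ u r • homToLin u.hom (homToLin (Φ.map (ell R (R1 R) s)) (w1 R Φ u)) :=
    map_smul (homToLin u.hom) _ _
  rw [h4] at h2
  exact h2.trans (smul_eq_mul (α := R) _ _)

theorem TT_add (hadd : ∀ (A B : CR R) (f g : A ⟶ B), Φ.map (f + g) = Φ.map f + Φ.map g)
    (F : CR R) (a b : F.obj) : TT R Φ u F (a + b) = TT R Φ u F a + TT R Φ u F b := by
  unfold TT
  rw [ell_add, hadd]
  exact LinearMap.add_apply _ _ _

theorem sigma0_add (hadd : ∀ (A B : CR R) (f g : A ⟶ B), Φ.map (f + g) = Φ.map f + Φ.map g)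
    (r s : R) : sigma0 R Φ u (r + s) = sigma0 R Φ u r + sigma0 R Φ u s := by
  unfold sigma0
  exact (congrArg (homToLin u.hom) (TT_add R Φ u hadd (R1 R) r s)).trans
    (map_add (homToLin u.hom) _ _)

theorem conj_bij {A B A' B' : CR R} (e : A' ≅ A) (e' : B ≅ B') :
    Function.Bijective (fun g : A ⟶ B => e.hom ≫ g ≫ e'.hom) :=
  Function.bijective_iff_has_inverse.mpr
    ⟨fun h => e.inv ≫ h ≫ e'.inv, fun g => by simp, fun h => by simp⟩

theorem sigma0_bij (hbij : ∀ A B : CR R, Function.Bijective fun f : A ⟶ B => Φ.map f) :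
    Function.Bijective (sigma0 R Φ u) := by
  have heq : sigma0 R Φ u = (fun f : R1 R ⟶ R1 R => homToLin f (1 : R))
      ∘ (fun g : Φ.obj (R1 R) ⟶ Φ.obj (R1 R) => u.inv ≫ g ≫ u.hom)
      ∘ (fun f : R1 R ⟶ R1 R => Φ.map f) ∘ (ell R (R1 R)) := rfl
  rw [heq]
  exact ((ev_one_bij R (R1 R)).comp ((conj_bij R u.symm u).comp
    ((hbij _ _).comp (ell_bij R (R1 R)))))

theorem TT_bij (hbij : ∀ A B : CR R, Function.Bijective fun f : A ⟶ B => Φ.map f)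
    (F : CR R) : Function.Bijective (TT R Φ u F) := by
  have heq : TT R Φ u F = (fun f : R1 R ⟶ Φ.obj F => homToLin f (1 : R))
      ∘ (fun g : Φ.obj (R1 R) ⟶ Φ.obj F => u.inv ≫ g ≫ 𝟙 (Φ.obj F))
      ∘ (fun f : R1 R ⟶ F => Φ.map f) ∘ (ell R F) := by
    funext a
    show TT R Φ u F a = homToLin (u.inv ≫ Φ.map (ell R F a) ≫ 𝟙 _) (1 : R)
    rw [Category.comp_id]
    rfl
  rw [heq]
  exact ((ev_one_bij R (Φ.obj F)).comp ((conj_bij R u.symm (Iso.refl (Φ.obj F))).comp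
    ((hbij _ _).comp (ell_bij R F))))

theorem TT_smul (F : CR R) (r : R) (a : F.obj) :
    TT R Φ u F (r • a) = sigma0 R Φ u r • TT R Φ u F a := by
  have h1 : TT R Φ u F (r • a)
      = homToLin (Φ.map (ell R F a)) (homToLin (Φ.map (ell R (R1 R) r)) (w1 R Φ u)) := by
    unfold TT
    rw [← ell_smul, Φ.map_comp]
    rfl
  rw [key3 R Φ u r] at h1
  exact h1.trans (map_smul (homToLin (Φ.map (ell R F a))) _ _)

theorem TT_nat (F G : CR R) (f : F ⟶ G) (a : F.obj) :
    homToLin (Φ.map f) (TT R Φ u F a) = TT R Φ u G (homToLin f a) := by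
  unfold TT
  rw [← ell_comp, Φ.map_comp]
  rfl

end Core

instance : Preadditive ↑(Cat.of (CR R)) := inferInstanceAs (Preadditive (CR R))

theorem exists_u
    (hR : (∀ n m : ℕ, Nonempty ((Fin n → R) ≃ₗ[R] (Fin m → R)) → n = m) ∨
          (∃ n h : ℕ, HasType R n h ∧ 1 < n) ∨
          HasType R 1 1 ∨ HasType R 1 2)
    (Φ : CR R ⥤ CR R) [Φ.IsEquivalence] [Φ.Additive] :
    Nonempty (Φ.obj (R1 R) ≅ R1 R) := by
  obtain ⟨k, ⟨hk⟩⟩ := exists_iso_Rn R (Φ.obj (Rn R 1))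
  obtain ⟨m, hm⟩ := exists_cls_one R Φ ⟨hk⟩
  obtain ⟨e⟩ := iso_of_cls R (cls_k_one R hR hm)
  have eR : Rn R 1 ≅ R1 R := isoOfLE R (LinearEquiv.funUnique (Fin 1) R R)
  exact ⟨Φ.mapIso eR.symm ≪≫ hk ≪≫ e ≪≫ eR⟩


end Aux

/-- if `R` has invariant basis number, or has type `(n, h)` with `n > 1`,
or has type `(1, 1)` or `(1, 2)`, then every automorphism of the category `C_R` of
finitely generated free left `R`-modules is semi-inner. -/
theorem stmt11 (R : Type) [Ring R]
    (hR : (∀ n m : ℕ, Nonempty ((Fin n → R) ≃ₗ[R] (Fin m → R)) → n = m) ∨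
          (∃ n h : ℕ, HasType R n h ∧ 1 < n) ∨
          HasType R 1 1 ∨ HasType R 1 2)
    (φ : Aut (Cat.of (CR R))) :
    SemiInner R φ := by
  haveI hE : (φ.hom.toFunctor : CR R ⥤ CR R).IsEquivalence := Phi_isEquiv R φ
  haveI hA := @Phi_additive R _ _ hE
  obtain ⟨u⟩ := @exists_u R _ hR _ hE hA
  have hadd : ∀ (A B : CR R) (f g : A ⟶ B), (φ.hom.toFunctor : CR R ⥤ CR R).map (f + g)
      = (φ.hom.toFunctor : CR R ⥤ CR R).map f + (φ.hom.toFunctor : CR R ⥤ CR R).map g :=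
    fun A B f g => hA.map_add
  have hbij := @Phi_bij R _ _ hE
  refine ⟨RingEquiv.ofBijective
      (RingHom.mk' ⟨⟨sigma0 R _ u, sigma0_one R _ u⟩, sigma0_mul R _ u⟩
        (sigma0_add R _ u hadd))
      (sigma0_bij R _ u hbij),
    fun F => AddEquiv.ofBijective (AddMonoidHom.mk' (TT R _ u F) (TT_add R _ u hadd F))
      (TT_bij R _ u hbij F),
    fun F r a => TT_smul R _ u F r a,
    fun F G f a => TT_nat R _ u F G f a⟩
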